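/- Let g(x) = Π_{l=1}^m g_l(x)^{e_l} be the factorization of g into distinct monic irreducible factors, let R_l = 𝔽_q[x]/(g_l(x)^{e_l}), and consider the diagonal action of multiplication by x on the product ring Π_{l=1}^m R_l. For each l, let 𝔠_l be an x-orbit of R_l with cardinality d_l and representative u_l. Set K_l = gcd(d_l, lcm(d_1, …, d_{l−1})) for l = 2, …, m. Then the tuples (u_1, x^{k_2}·u_2, …, x^{k_m}·u_m) with 0 ≤ k_l < K_l for l = 2, …, m lie in pairwise distinct orbits of the diagonal x-action, and every orbit of the diagonal x-action contained in 𝔠_1 × ⋯ × 𝔠_m contains exactly one of these tuples. -/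

import Mathlib

open Polynomial

/-- Chinese-remainder decomposition of `x`-orbits. Let `g = Π g_l^{e_l}` with
distinct monic irreducible factors `g_l` and `R_l = 𝔽_q[x]/(g_l^{e_l})`.
If `𝔠_l` is the `x`-orbit in `R_l` of `u_l`, with cardinality `d_l`, and
`K_l = gcd(d_l, lcm(d_1,…,d_{l-1}))` (`K_1 = 1`, since the lcm of the empty
family is `1`), then every orbit of the diagonal `x`-action contained in
`𝔠_1 × ⋯ × 𝔠_m` contains exactly one tuple `(x^{k_1}·u_1, …, x^{k_m}·u_m)`
with `0 ≤ k_l < K_l`; in particular those tuples lie in pairwise distinct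
diagonal orbits. -/

lemma exists_nat_mul_modEq (L d : ℕ) (hd : 0 < d) (z : ℤ) :
    ∃ t : ℕ, ((t : ℤ) * L) ≡ z * Nat.gcd L d [ZMOD d] := by
  have hbez := Nat.gcd_eq_gcd_ab L d
  set A : ℤ := z * Nat.gcdA L d with hA
  have hdpos : (0:ℤ) < d := by exact_mod_cast hd
  have h1 : ((A % d).toNat : ℤ) = A % d :=
    Int.toNat_of_nonneg (Int.emod_nonneg _ (by exact_mod_cast hd.ne'))
  refine ⟨(A % d).toNat, ?_⟩
  have ht : ((A % d).toNat : ℤ) ≡ A [ZMOD (d:ℤ)] := by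
    rw [Int.ModEq, h1]; exact Int.emod_emod_of_dvd A dvd_rfl
  calc ((A % d).toNat : ℤ) * L ≡ A * L [ZMOD d] := ht.mul_right _
    _ ≡ z * Nat.gcd L d [ZMOD d] := by
        rw [Int.modEq_iff_dvd]
        have : (z : ℤ) * Nat.gcd L d - A * L = d * (z * Nat.gcdB L d) := by
          rw [hbez, hA]; ring
        rw [this]; exact Dvd.intro _ rfl

/-- Shift `c` by a multiple of `L` so its residue mod `d` becomes `< gcd d L`. -/
lemma exists_shift (L d c : ℕ) (hd : 0 < d) :
    ∃ t : ℕ, (c + t * L) % d = c % Nat.gcd d L := by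
  set K := Nat.gcd d L with hKdef
  have hKpos : 0 < K := Nat.gcd_pos_of_pos_left L hd
  obtain ⟨t, ht⟩ := exists_nat_mul_modEq L d hd (-(c / K : ℕ))
  refine ⟨t, ?_⟩
  have hgc : Nat.gcd L d = K := Nat.gcd_comm L d
  rw [hgc] at ht
  have h := Nat.div_add_mod c K
  have key : ((c + t * L : ℕ) : ℤ) ≡ ((c % K : ℕ) : ℤ) [ZMOD d] := by
    push_cast
    calc (c : ℤ) + t * L ≡ c + (-(c / K : ℕ)) * K [ZMOD d] := (Int.ModEq.refl _).add ht
      _ = ((c % K : ℕ) : ℤ) := by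
            have h' : (K : ℤ) * ((c / K : ℕ) : ℤ) + ((c % K : ℕ) : ℤ) = (c : ℤ) := by
              exact_mod_cast h
            linear_combination -h'
  have hmod := Int.natCast_modEq_iff.mp key
  rw [Nat.ModEq] at hmod
  rw [hmod]
  exact Nat.mod_eq_of_lt (lt_of_lt_of_le (Nat.mod_lt _ hKpos)
    (Nat.le_of_dvd hd (Nat.gcd_dvd_left d L)))

lemma modEq_lcm {a b n m : ℕ} (h1 : a ≡ b [MOD n]) (h2 : a ≡ b [MOD m]) :
    a ≡ b [MOD Nat.lcm n m] := by
  rcases le_total a b with h | h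
  · rw [Nat.modEq_iff_dvd' h] at h1 h2 ⊢
    exact Nat.lcm_dvd h1 h2
  · exact ((Nat.modEq_iff_dvd' h).2 (Nat.lcm_dvd ((Nat.modEq_iff_dvd' h).1 h1.symm)
      ((Nat.modEq_iff_dvd' h).1 h2.symm))).symm

section FinLemmas
variable {m : ℕ}

/-- `filter (· < l)` in `Fin m` is `filter (val < l.val)`. -/
lemma filter_lt_eq (l : Fin m) :
    (Finset.filter (fun l' => l' < l) Finset.univ : Finset (Fin m))
      = Finset.filter (fun l' => l'.val < l.val) Finset.univ := by
  apply Finset.filter_congr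
  intro x _
  exact Fin.lt_def

lemma filter_succ_eq {r : ℕ} (hr : r < m) :
    (Finset.filter (fun l' : Fin m => l'.val < r + 1) Finset.univ)
      = insert ⟨r, hr⟩ (Finset.filter (fun l' : Fin m => l'.val < r) Finset.univ) := by
  ext x
  simp only [Finset.mem_filter, Finset.mem_univ, true_and, Finset.mem_insert, Fin.ext_iff]
  omega

lemma dvd_lcm_filter (d : Fin m → ℕ) {r : ℕ} {l : Fin m} (hl : l.val < r) :
    d l ∣ Finset.lcm (Finset.filter (fun l' : Fin m => l'.val < r) Finset.univ) d :=
  Finset.dvd_lcm (by simp [hl])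

lemma lcm_filter_pos (d : Fin m → ℕ) (hd : ∀ l, 0 < d l) (r : ℕ) :
    0 < Finset.lcm (Finset.filter (fun l' : Fin m => l'.val < r) Finset.univ) d := by
  rw [Nat.pos_iff_ne_zero, Ne, Finset.lcm_eq_zero_iff]
  intro h
  obtain ⟨l, -, hl⟩ := h
  exact (hd l).ne' hl

/-- Existence of a good shift `j`. -/
lemma exists_good_j (d a : Fin m → ℕ) (hd : ∀ l, 0 < d l) :
    ∃ j : ℕ, ∀ l : Fin m, (j + a l) % d l
      < Nat.gcd (d l) (Finset.lcm (Finset.filter (fun l' => l' < l) Finset.univ) d) := by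
  suffices h : ∀ r, r ≤ m → ∃ j : ℕ, ∀ l : Fin m, l.val < r → (j + a l) % d l
      < Nat.gcd (d l) (Finset.lcm (Finset.filter (fun l' => l' < l) Finset.univ) d) by
    obtain ⟨j, hj⟩ := h m le_rfl
    exact ⟨j, fun l => hj l l.isLt⟩
  intro r
  induction r with
  | zero => exact fun _ => ⟨0, fun l hl => absurd hl (Nat.not_lt_zero _)⟩
  | succ r ih =>
    intro hrm
    obtain ⟨j, hj⟩ := ih (Nat.le_of_succ_le hrm)
    have hr : r < m := hrm
    set l₀ : Fin m := ⟨r, hr⟩ with hl₀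
    set L := Finset.lcm (Finset.filter (fun l' : Fin m => l'.val < r) Finset.univ) d with hL
    obtain ⟨t, ht⟩ := exists_shift L (d l₀) (j + a l₀) (hd l₀)
    refine ⟨j + t * L, fun l hl => ?_⟩
    rcases Nat.lt_succ_iff_lt_or_eq.mp hl with hl' | hl'
    · have hdvd : d l ∣ t * L := Dvd.dvd.mul_left (dvd_lcm_filter d hl') t
      have : j + t * L + a l ≡ j + a l + 0 [MOD d l] := by
        calc j + t * L + a l = j + a l + t * L := by ring
          _ ≡ j + a l + 0 [MOD d l] :=
            Nat.ModEq.add_left _ ((Nat.modEq_zero_iff_dvd).mpr hdvd)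
      rw [Nat.ModEq] at this
      rw [this, Nat.add_zero]
      exact hj l hl'
    · have hleq : l = l₀ := Fin.ext hl'
      subst hleq
      rw [filter_lt_eq l₀, ← hL]
      have : j + t * L + a l₀ = j + a l₀ + t * L := by ring
      rw [this, ht]
      exact Nat.mod_lt _ (Nat.gcd_pos_of_pos_left _ (hd l₀))

/-- Uniqueness: two in-range tuples congruent to shifted `a` coincide. -/
lemma uniq_kk (d a : Fin m → ℕ) (hd : ∀ l, 0 < d l) (kk kk' : Fin m → ℕ) (j j' : ℕ)
    (h1 : ∀ l, kk l < Nat.gcd (d l) (Finset.lcm (Finset.filter (fun l' => l' < l) Finset.univ) d))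
    (h2 : ∀ l, kk' l < Nat.gcd (d l) (Finset.lcm (Finset.filter (fun l' => l' < l) Finset.univ) d))
    (h3 : ∀ l, kk l ≡ j + a l [MOD d l])
    (h4 : ∀ l, kk' l ≡ j' + a l [MOD d l]) :
    kk = kk' := by
  suffices h : ∀ r, r ≤ m →
      (j ≡ j' [MOD Finset.lcm (Finset.filter (fun l' : Fin m => l'.val < r) Finset.univ) d]) ∧
      ∀ l : Fin m, l.val < r → kk l = kk' l by
    exact funext fun l => (h m le_rfl).2 l l.isLt
  intro r
  induction r with
  | zero =>
    intro _
    constructor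
    · have : (Finset.filter (fun l' : Fin m => l'.val < 0) Finset.univ) = ∅ := by
        ext x; simp
      rw [this, Finset.lcm_empty]
      exact Nat.modEq_one
    · exact fun l hl => absurd hl (Nat.not_lt_zero _)
  | succ r ih =>
    intro hrm
    obtain ⟨hj, hkk⟩ := ih (Nat.le_of_succ_le hrm)
    have hr : r < m := hrm
    set l₀ : Fin m := ⟨r, hr⟩ with hl₀
    set L := Finset.lcm (Finset.filter (fun l' : Fin m => l'.val < r) Finset.univ) d with hL
    set Kl := Nat.gcd (d l₀) L with hKl
    have hKL : Nat.gcd (d l₀) (Finset.lcm (Finset.filter (fun l' => l' < l₀) Finset.univ) d)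
        = Kl := by rw [filter_lt_eq l₀]
    have hKd : Kl ∣ d l₀ := Nat.gcd_dvd_left _ _
    have hKL' : Kl ∣ L := Nat.gcd_dvd_right _ _
    -- kk l₀ = kk' l₀
    have hc1 : kk l₀ ≡ j + a l₀ [MOD Kl] := (h3 l₀).of_dvd hKd
    have hc2 : kk' l₀ ≡ j' + a l₀ [MOD Kl] := (h4 l₀).of_dvd hKd
    have hjj : j ≡ j' [MOD Kl] := hj.of_dvd hKL'
    have heq : kk l₀ = kk' l₀ := by
      have : kk l₀ ≡ kk' l₀ [MOD Kl] :=
        (hc1.trans ((hjj.add_right (a l₀)).trans hc2.symm))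
      rw [Nat.ModEq, Nat.mod_eq_of_lt (hKL ▸ h1 l₀), Nat.mod_eq_of_lt (hKL ▸ h2 l₀)] at this
      exact this
    -- j ≡ j' mod d l₀
    have hjd : j ≡ j' [MOD d l₀] := by
      have : j + a l₀ ≡ j' + a l₀ [MOD d l₀] :=
        (h3 l₀).symm.trans (heq ▸ (h4 l₀) : kk l₀ ≡ j' + a l₀ [MOD d l₀])
      exact Nat.ModEq.add_right_cancel' _ this
    constructor
    · rw [filter_succ_eq hr, Finset.lcm_insert, ← hL]
      exact modEq_lcm hjd hj
    · intro l hl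
      rcases Nat.lt_succ_iff_lt_or_eq.mp hl with hl' | hl'
      · exact hkk l hl'
      · have : l = l₀ := Fin.ext hl'
        rw [this]; exact heq


lemma quot_finite {F : Type} [Field F] [Fintype F] (f : Polynomial F) (hf : f ≠ 0) :
    Finite (Polynomial F ⧸ Ideal.span {f}) := by
  have pb : PowerBasis F (AdjoinRoot f) := AdjoinRoot.powerBasis hf
  exact Finite.of_equiv _ pb.basis.equivFun.toEquiv.symm

lemma quot_X_isUnit {F : Type} [Field F] (g : Polynomial F) (e : ℕ)
    (hg0 : g.coeff 0 ≠ 0) :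
    IsUnit (Ideal.Quotient.mk (Ideal.span {g ^ e}) X) := by
  have hnd : ¬ (X : Polynomial F) ∣ g ^ e := by
    intro h
    exact hg0 (X_dvd_iff.mp (Polynomial.prime_X.dvd_of_dvd_pow h))
  have hcop : IsCoprime (X : Polynomial F) (g ^ e) :=
    (Polynomial.irreducible_X).coprime_iff_not_dvd.mpr hnd
  obtain ⟨a, b, hab⟩ := hcop
  apply IsUnit.of_mul_eq_one (Ideal.Quotient.mk _ a)
  have hb : Ideal.Quotient.mk (Ideal.span {g ^ e}) (b * g ^ e) = 0 := by
    rw [Ideal.Quotient.eq_zero_iff_mem]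
    exact Ideal.mul_mem_left _ _ (Ideal.subset_span rfl)
  calc Ideal.Quotient.mk (Ideal.span {g ^ e}) X * Ideal.Quotient.mk _ a
      = Ideal.Quotient.mk _ (a * X + b * g ^ e) := by
        rw [map_add, map_mul, hb, add_zero, mul_comm]
    _ = 1 := by rw [hab, map_one]


section Orbit
variable {R : Type} [CommRing R] [Finite R] {x u : R}

lemma orbit_spec (hx : IsUnit x) :
    0 < ({w : R | ∃ k : ℕ, w = x ^ k * u}).ncard ∧
    ∀ k j : ℕ, (x ^ k * u = x ^ j * u ↔
      k ≡ j [MOD ({w : R | ∃ k : ℕ, w = x ^ k * u}).ncard]) := by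
  classical
  have hxn : ∃ t : ℕ, 0 < t ∧ x ^ t * u = u := by
    refine ⟨orderOf hx.unit, orderOf_pos _, ?_⟩
    have : (hx.unit : R) ^ orderOf hx.unit = 1 := by
      rw [← Units.val_pow_eq_pow_val, pow_orderOf_eq_one, Units.val_one]
    rw [hx.unit_spec] at this
    rw [this, one_mul]
  set p := Nat.find hxn with hpdef
  obtain ⟨hppos, hpu⟩ := Nat.find_spec hxn
  -- x ^ (p * c) * u = u
  have lem1 : ∀ c : ℕ, x ^ (p * c) * u = u := by
    intro c
    induction c with
    | zero => simp
    | succ c ih =>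
      rw [Nat.mul_succ, pow_add, mul_assoc, hpu, ih]
  have lem2 : ∀ t : ℕ, x ^ t * u = u ↔ p ∣ t := by
    intro t
    constructor
    · intro h
      have hdecomp : x ^ t * u = x ^ (t % p) * u := by
        conv_lhs => rw [← Nat.div_add_mod t p]
        rw [pow_add, mul_comm (x ^ (p * (t/p))), mul_assoc, lem1]
      rw [hdecomp] at h
      by_contra hnd
      have hne : t % p ≠ 0 := fun h0 => hnd (Nat.dvd_of_mod_eq_zero h0)
      exact Nat.find_min hxn (Nat.mod_lt t hppos) ⟨Nat.pos_of_ne_zero hne, h⟩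
    · rintro ⟨c, rfl⟩; exact lem1 c
  -- main iff with p
  have lem3 : ∀ k j : ℕ, x ^ k * u = x ^ j * u ↔ k ≡ j [MOD p] := by
    have main : ∀ k j : ℕ, k ≤ j → (x ^ k * u = x ^ j * u ↔ k ≡ j [MOD p]) := by
      intro k j hkj
      rw [Nat.modEq_iff_dvd' hkj, ← lem2 (j - k)]
      constructor
      · intro h
        apply (hx.pow k).mul_left_cancel
        rw [← mul_assoc, ← pow_add, Nat.add_sub_cancel' hkj, ← h]
      · intro h
        conv_rhs => rw [← Nat.add_sub_cancel' hkj, pow_add, mul_assoc, h]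
    intro k j
    rcases le_total k j with h | h
    · exact main k j h
    · rw [eq_comm, Nat.ModEq.comm]; exact main j k h
  -- the orbit is the image of range p
  have hfin : Fintype R := Fintype.ofFinite R
  have hset : {w : R | ∃ k : ℕ, w = x ^ k * u}
      = ↑((Finset.range p).image (fun k => x ^ k * u)) := by
    ext w
    simp only [Set.mem_setOf_eq, Finset.coe_image, Set.mem_image, Finset.mem_coe,
      Finset.mem_range]
    constructor
    · rintro ⟨k, rfl⟩
      refine ⟨k % p, Nat.mod_lt k hppos, ?_⟩
      exact ((lem3 (k % p) k).mpr (Nat.mod_modEq k p)).symm ▸ rfl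
    · rintro ⟨k, -, rfl⟩; exact ⟨k, rfl⟩
  have hcard : ({w : R | ∃ k : ℕ, w = x ^ k * u}).ncard = p := by
    rw [hset, Set.ncard_coe_finset, Finset.card_image_of_injOn, Finset.card_range]
    intro k hk j hj h
    simp only [Finset.coe_range, Set.mem_Iio] at hk hj
    have := (lem3 k j).mp h
    rwa [Nat.ModEq, Nat.mod_eq_of_lt hk, Nat.mod_eq_of_lt hj] at this
  rw [hcard]
  exact ⟨hppos, lem3⟩

end Orbit

theorem stmt_7
    (p δ : ℕ) (hp : p.Prime) (hδ : 1 ≤ δ)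
    (F : Type) [Field F] [Fintype F] (hcard : Fintype.card F = p ^ δ)
    (m : ℕ) (hm : 1 ≤ m)
    (g : Fin m → Polynomial F) (e : Fin m → ℕ)
    (hmonic : ∀ l, (g l).Monic) (hirr : ∀ l, Irreducible (g l))
    (hg0 : ∀ l, (g l).coeff 0 ≠ 0) (he : ∀ l, 1 ≤ e l)
    (hdistinct : ∀ l l', l ≠ l' → g l ≠ g l')
    (u : (l : Fin m) → Polynomial F ⧸ Ideal.span {g l ^ e l})
    (d : Fin m → ℕ)
    (hd : ∀ l, d l = Set.ncard {w : Polynomial F ⧸ Ideal.span {g l ^ e l} |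
        ∃ k : ℕ, w = Ideal.Quotient.mk (Ideal.span {g l ^ e l}) X ^ k * u l})
    (K : Fin m → ℕ)
    (hK : ∀ l, K l = Nat.gcd (d l) (Finset.lcm (Finset.filter (fun l' => l' < l) Finset.univ) d)) :
    ∀ v : (l : Fin m) → Polynomial F ⧸ Ideal.span {g l ^ e l},
      (∀ l, ∃ k : ℕ, v l = Ideal.Quotient.mk (Ideal.span {g l ^ e l}) X ^ k * u l) →
      ∃! kk : Fin m → ℕ,
        (∀ l, kk l < K l) ∧
        ∃ j : ℕ, ∀ l,
          Ideal.Quotient.mk (Ideal.span {g l ^ e l}) X ^ (kk l) * u l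
            = Ideal.Quotient.mk (Ideal.span {g l ^ e l}) X ^ j * v l := by
  intro v hv
  choose a ha using hv
  -- instances and orbit facts for each component
  have hfin : ∀ l, Finite (Polynomial F ⧸ Ideal.span {g l ^ e l}) := fun l =>
    quot_finite _ (pow_ne_zero _ (hmonic l).ne_zero)
  have hxu : ∀ l, IsUnit (Ideal.Quotient.mk (Ideal.span {g l ^ e l}) X) := fun l =>
    quot_X_isUnit (g l) (e l) (hg0 l)
  have horb : ∀ l, 0 < d l ∧ ∀ k j : ℕ,
      (Ideal.Quotient.mk (Ideal.span {g l ^ e l}) X ^ k * u l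
        = Ideal.Quotient.mk (Ideal.span {g l ^ e l}) X ^ j * u l ↔ k ≡ j [MOD d l]) := by
    intro l
    letI := hfin l
    have := orbit_spec (u := u l) (hxu l)
    rw [← hd l] at this
    exact this
  have hdpos : ∀ l, 0 < d l := fun l => (horb l).1
  have hiff := fun l => (horb l).2
  -- reformulate the matching condition arithmetically
  have hcond : ∀ (k j : ℕ) (l : Fin m),
      (Ideal.Quotient.mk (Ideal.span {g l ^ e l}) X ^ k * u l
        = Ideal.Quotient.mk (Ideal.span {g l ^ e l}) X ^ j * v l)
      ↔ k ≡ j + a l [MOD d l] := by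
    intro k j l
    rw [ha l, ← mul_assoc, ← pow_add]
    exact hiff l k (j + a l)
  obtain ⟨j, hj⟩ := exists_good_j d a hdpos
  refine ⟨fun l => (j + a l) % d l, ⟨?_, j, ?_⟩, ?_⟩
  · intro l
    rw [hK l]
    exact hj l
  · intro l
    exact (hcond _ j l).mpr (Nat.mod_modEq _ _)
  · rintro kk' ⟨hlt', j', hj'⟩
    refine uniq_kk d a hdpos kk' _ j' j ?_ ?_ ?_ ?_
    · intro l; rw [← hK l]; exact hlt' l
    · intro l; exact hj l
    · intro l; exact (hcond _ j' l).mp (hj' l)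
    · intro l; exact Nat.mod_modEq _ _
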